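/- Every digraph D exists a maximal spanning out-forest: a spanning out-forest F such that for every arc x → y of D with l_F(x) ≥ l_F(y), there is a directed path from y to x in F. -/

import Mathlib

/-- The underlying simple graph of a digraph given as a relation. -/
def underlyingGraph {V : Type*} (D : V → V → Prop) : SimpleGraph V where
  Adj a b := a ≠ b ∧ (D a b ∨ D b a)
  symm := ⟨fun _ _ h => ⟨h.1.symm, h.2.symm⟩⟩
  loopless := ⟨fun _ h => h.1 rfl⟩

/-- A directed chain (directed path) in `F`, given by an injective enumeration. -/
def IsDirChain {V : Type*} (F : V → V → Prop) {n : ℕ} (f : Fin (n + 1) → V) : Prop :=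
  Function.Injective f ∧ ∀ i j : Fin (n + 1), (j : ℕ) = (i : ℕ) + 1 → F (f i) (f j)

/-- There is a directed path of `F` with `n+1` vertices ending at `v`. -/
def EndsAt {V : Type*} (F : V → V → Prop) (n : ℕ) (v : V) : Prop :=
  ∃ f : Fin (n + 1) → V, IsDirChain F f ∧ f (Fin.last n) = v

/-- The level of `v` in `F` is `i`: the order of a longest directed path of `F`
ending at `v` equals `i`. -/
def LevelIs {V : Type*} (F : V → V → Prop) (v : V) (i : ℕ) : Prop :=
  1 ≤ i ∧ EndsAt F (i - 1) v ∧ ∀ m, EndsAt F m v → m + 1 ≤ i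

/-- There is a directed path in `F` from `u` to `v`. -/
def DirReach {V : Type*} (F : V → V → Prop) (u v : V) : Prop :=
  ∃ (n : ℕ) (f : Fin (n + 1) → V), IsDirChain F f ∧ f 0 = u ∧ f (Fin.last n) = v

/-- `F` is an out-forest: every vertex has in-degree at most one and the
underlying graph is acyclic (so every component is an out-branching). -/
def IsOutForest {V : Type*} (F : V → V → Prop) : Prop :=
  (∀ a b c, F a c → F b c → a = b) ∧ (underlyingGraph F).IsAcyclic

/-- `F` is a maximal spanning out-forest of `D`: a spanning subdigraph of `D`
which is an out-forest, such that for every arc `x → y` of `D` with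
`l_F(x) ≥ l_F(y)` there is a directed path from `y` to `x` in `F`. -/
def IsMaxSpanningOutForest {V : Type*} (D F : V → V → Prop) : Prop :=
  (∀ a b, F a b → D a b) ∧ IsOutForest F ∧
    ∀ x y, D x y → ∀ i j, LevelIs F x i → LevelIs F y j → j ≤ i → DirReach F y x

/-! ### Auxiliary development -/

namespace OutForestAux

variable {V : Type*}

/-- The forest relation determined by a parent map. -/
def Fof (p : V → Option V) : V → V → Prop := fun a b => p b = some a

/-- Step to the parent (or stay put at a root). -/
def up (p : V → Option V) (v : V) : V := (p v).getD v

section basic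

variable {p : V → Option V} {r : V → ℕ}

theorem up_step (h2 : ∀ v, p v = none → r v = 0) {w : V} (hw : r w ≠ 0) :
    p w = some (up p w) := by
  cases hpw : p w with
  | none => exact absurd (h2 w hpw) hw
  | some a => simp [up, hpw]

theorem iter_r (h1 : ∀ u v, p v = some u → r v = r u + 1) (h2 : ∀ v, p v = none → r v = 0)
    (v : V) : ∀ k, k ≤ r v → r ((up p)^[k] v) + k = r v := by
  intro k
  induction k with
  | zero => simp
  | succ k ih =>
    intro hk
    have hIH := ih (Nat.le_of_succ_le hk)
    have hne : r ((up p)^[k] v) ≠ 0 := by omega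
    have hps : p ((up p)^[k] v) = some (up p ((up p)^[k] v)) := up_step h2 hne
    have := h1 _ _ hps
    rw [Function.iterate_succ_apply']
    omega

theorem chain_aux (h1 : ∀ u v, p v = some u → r v = r u + 1) (h2 : ∀ v, p v = none → r v = 0)
    (v : V) (m : ℕ) (hm : m ≤ r v) :
    IsDirChain (Fof p) (fun i : Fin (m + 1) => (up p)^[m - (i : ℕ)] v) := by
  constructor
  · intro i j hij
    have hi := iter_r h1 h2 v (m - (i : ℕ)) (by omega)
    have hj := iter_r h1 h2 v (m - (j : ℕ)) (by omega)
    simp only at hij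
    rw [hij] at hi
    have hi2 : (i : ℕ) < m + 1 := i.isLt
    have hj2 : (j : ℕ) < m + 1 := j.isLt
    exact Fin.ext (by omega)
  · intro i j hij
    have hj2 : (j : ℕ) < m + 1 := j.isLt
    have hstep : m - (i : ℕ) = (m - (j : ℕ)) + 1 := by omega
    have hrj := iter_r h1 h2 v (m - (j : ℕ)) (by omega)
    have hne : r ((up p)^[m - (j : ℕ)] v) ≠ 0 := by omega
    show p _ = some _
    simp only [hstep, Function.iterate_succ_apply']
    exact up_step h2 hne

theorem endsAt_of_le (h1 : ∀ u v, p v = some u → r v = r u + 1)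
    (h2 : ∀ v, p v = none → r v = 0) (v : V) (m : ℕ) (hm : m ≤ r v) :
    EndsAt (Fof p) m v :=
  ⟨fun i : Fin (m + 1) => (up p)^[m - (i : ℕ)] v, chain_aux h1 h2 v m hm, by simp⟩

theorem dirReach_of_iter (h1 : ∀ u v, p v = some u → r v = r u + 1)
    (h2 : ∀ v, p v = none → r v = 0) {x y : V} (k : ℕ) (hk : k ≤ r x)
    (hxy : (up p)^[k] x = y) : DirReach (Fof p) y x :=
  ⟨k, fun i : Fin (k + 1) => (up p)^[k - (i : ℕ)] x, chain_aux h1 h2 x k hk,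
    by simpa using hxy, by simp⟩

theorem chain_r (h1 : ∀ u v, p v = some u → r v = r u + 1) {n : ℕ} {f : Fin (n + 1) → V}
    (hf : IsDirChain (Fof p) f) : ∀ i : Fin (n + 1), (i : ℕ) ≤ r (f i) := by
  intro i
  obtain ⟨i, hi⟩ := i
  induction i with
  | zero => simp
  | succ k ih =>
    have hk : k < n + 1 := by omega
    have hedge := hf.2 ⟨k, hk⟩ ⟨k + 1, hi⟩ rfl
    have h2 := h1 _ _ hedge
    have h3 := ih hk
    simp only at h2 h3 ⊢
    omega

theorem endsAt_le (h1 : ∀ u v, p v = some u → r v = r u + 1) {m : ℕ} {v : V}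
    (h : EndsAt (Fof p) m v) : m ≤ r v := by
  obtain ⟨f, hf, hlast⟩ := h
  have := chain_r h1 hf (Fin.last m)
  simpa [hlast] using this

theorem levelIs (h1 : ∀ u v, p v = some u → r v = r u + 1)
    (h2 : ∀ v, p v = none → r v = 0) (v : V) : LevelIs (Fof p) v (r v + 1) := by
  refine ⟨by omega, by simpa using endsAt_of_le h1 h2 v (r v) le_rfl, fun m hm => ?_⟩
  have := endsAt_le h1 hm
  omega

theorem reach_iter (h1 : ∀ u v, p v = some u → r v = r u + 1) {x y : V}
    (h : DirReach (Fof p) y x) : ∃ k, k ≤ r x ∧ (up p)^[k] x = y := by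
  obtain ⟨n, f, hf, h0, hlast⟩ := h
  have key : ∀ k, k ≤ n → (up p)^[k] x = f ⟨n - k, by omega⟩ := by
    intro k
    induction k with
    | zero =>
      intro _
      simpa using hlast.symm.trans (congrArg f (Fin.ext (by simp)))
    | succ k ih =>
      intro hk
      have hIH := ih (by omega)
      have hlt : n - k < n + 1 := by omega
      have hedge := hf.2 ⟨n - (k + 1), by omega⟩ ⟨n - k, hlt⟩ (by simp; omega)
      have hup : up p (f ⟨n - k, hlt⟩) = f ⟨n - (k + 1), by omega⟩ := by
        show (p _).getD _ = _
        rw [hedge]; rfl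
      rw [Function.iterate_succ_apply', hIH, hup]
  have hn : n ≤ r x := by
    have := chain_r h1 hf (Fin.last n)
    simpa [hlast] using this
  refine ⟨n, hn, ?_⟩
  rw [key n le_rfl, ← h0]
  congr 1
  exact Fin.ext (by simp)

end basic


theorem level_unique {F : V → V → Prop} {v : V} {i j : ℕ}
    (hi : LevelIs F v i) (hj : LevelIs F v j) : i = j := by
  obtain ⟨hi1, hiE, hiM⟩ := hi
  obtain ⟨hj1, hjE, hjM⟩ := hj
  have := hiM _ hjE
  have := hjM _ hiE
  omega

end OutForestAux
namespace OutForestAux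

open SimpleGraph Walk in
theorem isOutForest {V : Type*} [Fintype V] {p : V → Option V} {r : V → ℕ}
    (h1 : ∀ u v, p v = some u → r v = r u + 1) :
    IsOutForest (Fof p) := by
  constructor
  · intro a b c hac hbc
    exact Option.some_injective V (hac.symm.trans hbc)
  · intro v c hc
    classical
    -- pick a vertex of maximal rank on the cycle
    obtain ⟨u, hu, hmax⟩ := Finset.exists_max_image c.support.toFinset r
      ⟨v, by simp [Walk.start_mem_support]⟩
    rw [List.mem_toFinset] at hu
    have hmax' : ∀ w ∈ c.support, r w ≤ r u := fun w hw => hmax w (by simpa using hw)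
    have hc' := hc.rotate hu
    -- membership transfer for the rotated cycle
    have hmem : ∀ w ∈ (c.rotate u hu).support, r w ≤ r u := by
      intro w hw
      rcases List.mem_cons.mp ((c.rotate u hu).support_eq_cons ▸ hw) with h | h
      · exact h ▸ le_rfl
      · exact hmax' w (List.mem_of_mem_tail
          (((c.support_rotate u hu).mem_iff).mp h))
    cases hC : c.rotate u hu with
    | nil => rw [hC] at hc'; exact Walk.IsCycle.not_of_nil hc'
    | cons hadj q =>
      rw [hC] at hc' hmem
      rw [Walk.cons_isCycle_iff] at hc'
      obtain ⟨hqpath, hedge⟩ := hc'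
      rename_i w1
      have hne1 : u ≠ w1 ∧ (Fof p u w1 ∨ Fof p w1 u) := hadj
      have hw1mem : r w1 ≤ r u := hmem w1 (by simp [Walk.support_cons, Walk.start_mem_support])
      have hF1 : Fof p w1 u := by
        rcases hne1.2 with h | h
        · exact absurd (h1 _ _ h) (by omega)
        · exact h
      -- last edge of q
      obtain ⟨w2, hadj2, q', hq'⟩ := Walk.exists_eq_cons_of_ne hne1.1 q.reverse
      have he2 : s(u, w2) ∈ q.edges := by
        have : s(u, w2) ∈ q.reverse.edges := by rw [hq']; simp
        rwa [Walk.edges_reverse, List.mem_reverse] at this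
      have hw2mem : r w2 ≤ r u := by
        have : w2 ∈ q.support := q.snd_mem_support_of_mem_edges he2
        exact hmem w2 (by simp [Walk.support_cons, this])
      have hne2 : u ≠ w2 ∧ (Fof p u w2 ∨ Fof p w2 u) := hadj2
      have hF2 : Fof p w2 u := by
        rcases hne2.2 with h | h
        · exact absurd (h1 _ _ h) (by omega)
        · exact h
      have : w1 = w2 := Option.some_injective V (hF1.symm.trans hF2)
      exact hedge (this ▸ he2)

end OutForestAux
open OutForestAux in
theorem stmt_12 {V : Type*} [Fintype V] (D : V → V → Prop)
    (hasym : ∀ a b, D a b → ¬ D b a) :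
    ∃ F : V → V → Prop, IsMaxSpanningOutForest D F := by
  classical
  set Good : (V → Option V) → (V → ℕ) → Prop := fun p r =>
    (∀ u v, p v = some u → r v = r u + 1) ∧ (∀ v, p v = none → r v = 0) ∧
    (∀ u v, p v = some u → D u v) with hGood
  set T : Set ℕ := {n | ∃ p r, Good p r ∧ ∑ v, r v = n} with hT
  have hT0 : (0 : ℕ) ∈ T :=
    ⟨fun _ => none, fun _ => 0,
      ⟨fun u v h => by simp at h, fun _ _ => rfl, fun u v h => by simp at h⟩, by simp⟩
  have hbdd : BddAbove T := by
    refine ⟨Fintype.card V * Fintype.card V, ?_⟩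
    rintro n ⟨p, r, ⟨h1, h2, h3⟩, rfl⟩
    have hv : ∀ v, r v ≤ Fintype.card V := by
      intro v
      obtain ⟨f, hf, -⟩ := endsAt_of_le h1 h2 v (r v) le_rfl
      have := Fintype.card_le_of_injective f hf.1
      rw [Fintype.card_fin] at this
      omega
    calc ∑ v, r v ≤ ∑ _v : V, Fintype.card V := Finset.sum_le_sum (fun v _ => hv v)
      _ = Fintype.card V * Fintype.card V := by
          simp [Finset.sum_const, Finset.card_univ, mul_comm]
  obtain ⟨p, r, ⟨h1, h2, h3⟩, hsum⟩ := Nat.sSup_mem ⟨0, hT0⟩ hbdd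
  refine ⟨Fof p, fun a b hab => h3 a b hab, isOutForest h1, ?_⟩
  intro x y hxy i j hix hjy hji
  have hi := level_unique hix (levelIs h1 h2 x)
  have hj := level_unique hjy (levelIs h1 h2 y)
  subst hi; subst hj
  have hryx : r y ≤ r x := by omega
  by_contra hreach
  set d := r x + 1 - r y with hd
  set Anc : V → Prop := fun v => ∃ k, k ≤ r v ∧ (up p)^[k] v = y with hAnc
  have hAy : Anc y := ⟨0, Nat.zero_le _, rfl⟩
  have hAx : ¬ Anc x := fun ⟨k, hk, he⟩ => hreach (dirReach_of_iter h1 h2 k hk he)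
  set p' : V → Option V := fun v => if v = y then some x else p v with hp'
  set r' : V → ℕ := fun v => if Anc v then r v + d else r v with hr'
  have hupeq : ∀ v u, p v = some u → up p v = u := fun v u h => by simp [up, h]
  have htrans : ∀ v u, v ≠ y → p v = some u → (Anc v ↔ Anc u) := by
    intro v u hvy hpv
    constructor
    · rintro ⟨k, hk, he⟩
      have hk0 : k ≠ 0 := by rintro rfl; exact hvy he
      refine ⟨k - 1, ?_, ?_⟩
      · have := h1 u v hpv; omega
      · have hkk : k - 1 + 1 = k := by omega
        have hcalc : (up p)^[k] v = (up p)^[k - 1] u := by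
          conv_lhs => rw [← hkk]
          rw [Function.iterate_succ_apply, hupeq v u hpv]
        rw [← hcalc]; exact he
    · rintro ⟨k, hk, he⟩
      refine ⟨k + 1, ?_, ?_⟩
      · have := h1 u v hpv; omega
      · rw [Function.iterate_succ_apply, hupeq v u hpv, he]
  have h1' : ∀ u v, p' v = some u → r' v = r' u + 1 := by
    intro u v hpv
    by_cases hvy : v = y
    · subst hvy
      have hux : u = x := by
        have h' := hpv
        simp only [hp', if_pos rfl] at h'
        exact (Option.some_injective V h').symm
      subst hux
      simp only [hr', if_pos hAy, if_neg hAx]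
      omega
    · have hpv' : p v = some u := by simpa [hp', hvy] using hpv
      have hiff := htrans v u hvy hpv'
      have hrv := h1 u v hpv'
      by_cases hA : Anc v
      · simp only [hr', if_pos hA, if_pos (hiff.mp hA)]; omega
      · simp only [hr', if_neg hA, if_neg (fun hu => hA (hiff.mpr hu))]; omega
  have h2' : ∀ v, p' v = none → r' v = 0 := by
    intro v hv
    have hvy : v ≠ y := by intro h; subst h; simp [hp'] at hv
    have hpv : p v = none := by simpa [hp', hvy] using hv
    have hr0 := h2 v hpv
    have hA : ¬ Anc v := by
      rintro ⟨k, hk, he⟩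
      rw [hr0, Nat.le_zero] at hk
      subst hk
      exact hvy he
    simp [hr', hA, hr0]
  have h3' : ∀ u v, p' v = some u → D u v := by
    intro u v hpv
    by_cases hvy : v = y
    · subst hvy
      have hux : u = x := by
        have h' := hpv
        simp only [hp', if_pos rfl] at h'
        exact (Option.some_injective V h').symm
      subst hux; exact hxy
    · exact h3 u v (by simpa [hp', hvy] using hpv)
  have hmem : (∑ v, r' v) ∈ T := ⟨p', r', ⟨h1', h2', h3'⟩, rfl⟩
  have hlt : ∑ v, r v < ∑ v, r' v := by
    refine Finset.sum_lt_sum (fun v _ => ?_) ⟨y, Finset.mem_univ y, ?_⟩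
    · simp only [hr']
      split <;> omega
    · simp only [hr', if_pos hAy]; omega
  have hle := le_csSup hbdd hmem
  omega
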